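/- If K : ℝ → ℂ is integrable on [x,∞) and decays so that |K(y)| ≤ C ∫_{(x+y)/2}^∞ h(z) dz with h ∈ L¹ nonnegative, then the transformation-operator integral ∫_x^∞ K(y) e^{iky} dy converges absolutely for Im k ≥ 0 and defines a continuous function of k on the closed upper half plane, analytic in the open upper half plane. -/

import Mathlib

open Complex MeasureTheory Set

private lemma aux_texp_le (a t : ℝ) (ha : 0 < a) (ht : 0 ≤ t) :
    t * Real.exp (-(a * t)) ≤ 1 / a := by
  have h1 : a * t ≤ Real.exp (a * t) := by
    have := Real.add_one_le_exp (a * t); linarith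
  have hexp : (0 : ℝ) < Real.exp (a * t) := Real.exp_pos _
  rw [Real.exp_neg, ← div_eq_mul_inv, div_le_div_iff₀ hexp ha]
  nlinarith

private lemma aux_integrableOn_K
    (h : ℝ → ℝ) (hpos : ∀ z, 0 ≤ h z)
    (hint : Integrable (fun z => (1 + |z|) * h z))
    (C : ℝ) (hC : 0 < C) (x : ℝ)
    (K : ℝ → ℂ) (hK : Measurable K)
    (hbound : ∀ y ≥ x, ‖K y‖ ≤ C * ∫ z in Ici ((x + y) / 2), h z) :
    IntegrableOn K (Ici x) := by
  have hmeas : AEMeasurable h := by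
    have hrw : h = fun z => (1 + |z|)⁻¹ * ((1 + |z|) * h z) := by
      funext z
      have h1 : (0 : ℝ) < 1 + |z| := by positivity
      field_simp
    rw [hrw]
    exact ((continuous_const.add _root_.continuous_abs).measurable.inv).aemeasurable.mul
      hint.aemeasurable
  have hIh : Integrable h := by
    refine hint.mono' hmeas.aestronglyMeasurable ?_
    filter_upwards with z
    rw [Real.norm_eq_abs, _root_.abs_of_nonneg (hpos z)]
    nlinarith [hpos z, abs_nonneg z]
  set F : ℝ → ℝ := fun t => ∫ z in Ici t, h z with hF
  have Fanti : Antitone F := by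
    intro s t hst
    exact setIntegral_mono_set hIh.integrableOn
      (Filter.Eventually.of_forall hpos)
      (HasSubset.Subset.eventuallyLE (Ici_subset_Ici.2 hst))
  have Fmeas : Measurable F := Fanti.measurable
  -- a measurable nonnegative a.e.-representative of h
  set h₀ : ℝ → ℝ := fun z => max (hmeas.mk h z) 0 with hh₀
  have h₀meas : Measurable h₀ := hmeas.measurable_mk.max measurable_const
  have h₀nonneg : ∀ z, 0 ≤ h₀ z := fun z => le_max_right _ _
  have h₀eq : h =ᵐ[volume] h₀ := by
    filter_upwards [hmeas.ae_eq_mk] with z hz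
    simp only [hh₀, ← hz, max_eq_left (hpos z)]
  have hF_lint : ∀ t : ℝ, ENNReal.ofReal (F t) =
      ∫⁻ z in Ici t, ENNReal.ofReal (h₀ z) := by
    intro t
    have h₀int : IntegrableOn h₀ (Ici t) := (hIh.congr h₀eq).integrableOn
    have hFt : F t = ∫ z in Ici t, h₀ z :=
      integral_congr_ae (ae_restrict_of_ae h₀eq)
    rw [hFt, ofReal_integral_eq_lintegral_ofReal h₀int
      (ae_restrict_of_ae (Filter.Eventually.of_forall h₀nonneg))]
  set G : ℝ → ENNReal := fun z => ENNReal.ofReal (h₀ z) with hG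
  have hGmeas : Measurable G := ENNReal.measurable_ofReal.comp h₀meas
  -- the product-space function used for Tonelli
  set S : Set (ℝ × ℝ) := {p : ℝ × ℝ | x ≤ p.1 ∧ (x + p.1) / 2 ≤ p.2} with hS
  have hSmeas : MeasurableSet S := by
    apply MeasurableSet.inter
    · exact measurableSet_le measurable_const measurable_fst
    · exact measurableSet_le ((measurable_const.add measurable_fst).div_const 2)
        measurable_snd
  set f : ℝ × ℝ → ENNReal := S.indicator (fun p => G p.2) with hf
  have hfmeas : Measurable f := (hGmeas.comp measurable_snd).indicator hSmeas
  -- key finiteness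
  have hkey : ∫⁻ y in Ici x, ENNReal.ofReal (F ((x + y) / 2)) < ⊤ := by
    have step1 : ∫⁻ y in Ici x, ENNReal.ofReal (F ((x + y) / 2)) =
        ∫⁻ y, ∫⁻ z, f (y, z) := by
      rw [← lintegral_indicator measurableSet_Ici _]
      refine lintegral_congr fun y => ?_
      by_cases hy : x ≤ y
      · rw [indicator_of_mem (by exact hy : y ∈ Ici x), hF_lint,
          ← lintegral_indicator measurableSet_Ici _]
        refine lintegral_congr fun z => ?_
        by_cases hz : (x + y) / 2 ≤ z
        · rw [indicator_of_mem (by exact hz : z ∈ Ici ((x + y) / 2))]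
          have : f (y, z) = G z := indicator_of_mem (by exact ⟨hy, hz⟩) _
          rw [this]
        · rw [indicator_of_notMem (by exact hz : z ∉ Ici ((x + y) / 2))]
          have : f (y, z) = 0 := indicator_of_notMem (fun hmem => hz hmem.2) _
          rw [this]
      · rw [indicator_of_notMem (by exact hy : y ∉ Ici x)]
        symm
        have : ∀ z : ℝ, f (y, z) = 0 := by
          intro z
          exact indicator_of_notMem (fun hmem => hy hmem.1) _
        simp [this]
    have step2 : ∫⁻ y, ∫⁻ z, f (y, z) = ∫⁻ z, ∫⁻ y, f (y, z) :=
      lintegral_lintegral_swap hfmeas.aemeasurable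
    have step3 : ∀ z : ℝ, ∫⁻ y, f (y, z) = G z * ENNReal.ofReal (2 * z - 2 * x) := by
      intro z
      have hiff : ∀ y : ℝ, f (y, z) = (Icc x (2 * z - x)).indicator (fun _ => G z) y := by
        intro y
        by_cases hy : y ∈ Icc x (2 * z - x)
        · rw [mem_Icc] at hy
          have h1 : f (y, z) = G z :=
            indicator_of_mem (by exact ⟨hy.1, by simp only; linarith [hy.2]⟩) _
          rw [h1, indicator_of_mem (mem_Icc.2 hy)]
        · have h1 : f (y, z) = 0 := by
            refine indicator_of_notMem (fun hmem => ?_) _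
            rw [mem_Icc] at hy
            push_neg at hy
            have h2 : (x + y) / 2 ≤ z := hmem.2
            have h3 := hy hmem.1
            linarith
          rw [h1, indicator_of_notMem hy]
      simp_rw [hiff]
      rw [lintegral_indicator measurableSet_Icc _, setLIntegral_const,
        Real.volume_Icc]
      congr 1
      ring_nf
    have step4 : ∫⁻ z, ∫⁻ y, f (y, z) ≤
        ENNReal.ofReal (2 + 2 * |x|) * ∫⁻ z, ENNReal.ofReal ((1 + |z|) * h₀ z) := by
      rw [← lintegral_const_mul' _ _ (by exact ENNReal.ofReal_ne_top)]
      refine lintegral_mono fun z => ?_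
      rw [step3, hG]
      calc ENNReal.ofReal (h₀ z) * ENNReal.ofReal (2 * z - 2 * x)
          ≤ ENNReal.ofReal (h₀ z) * ENNReal.ofReal ((2 + 2 * |x|) * (1 + |z|)) := by
            refine mul_le_mul_right (ENNReal.ofReal_le_ofReal ?_) _
            nlinarith [le_abs_self z, neg_abs_le x, abs_nonneg z, abs_nonneg x,
              mul_nonneg (abs_nonneg x) (abs_nonneg z)]
        _ = ENNReal.ofReal (2 + 2 * |x|) * ENNReal.ofReal ((1 + |z|) * h₀ z) := by
            rw [← ENNReal.ofReal_mul (h₀nonneg z), ← ENNReal.ofReal_mul (by positivity)]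
            congr 1
            ring
    have step5 : ∫⁻ z, ENNReal.ofReal ((1 + |z|) * h₀ z) < ⊤ := by
      have heq : ∫⁻ z, ENNReal.ofReal ((1 + |z|) * h₀ z) =
          ∫⁻ z, ENNReal.ofReal ((1 + |z|) * h z) := by
        refine lintegral_congr_ae ?_
        filter_upwards [h₀eq] with z hz
        rw [hz]
      rw [heq]
      exact hint.lintegral_lt_top
    rw [step1, step2]
    refine lt_of_le_of_lt step4 ?_
    exact ENNReal.mul_lt_top ENNReal.ofReal_lt_top step5
  -- the dominating function is integrable on `Ici x`
  have hgInt : IntegrableOn (fun y => C * F ((x + y) / 2)) (Ici x) := by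
    constructor
    · exact ((Fmeas.comp ((measurable_const.add measurable_id).div_const 2)).const_mul
        C).aestronglyMeasurable
    · have hnn : 0 ≤ᵐ[volume.restrict (Ici x)] fun y => C * F ((x + y) / 2) := by
        refine Filter.Eventually.of_forall fun y => ?_
        have : 0 ≤ F ((x + y) / 2) :=
          setIntegral_nonneg measurableSet_Ici fun z _ => hpos z
        positivity
      rw [hasFiniteIntegral_iff_ofReal hnn]
      calc ∫⁻ y in Ici x, ENNReal.ofReal (C * F ((x + y) / 2))
          = ∫⁻ y in Ici x, ENNReal.ofReal C * ENNReal.ofReal (F ((x + y) / 2)) := by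
            refine lintegral_congr fun y => ?_
            rw [ENNReal.ofReal_mul hC.le]
        _ = ENNReal.ofReal C * ∫⁻ y in Ici x, ENNReal.ofReal (F ((x + y) / 2)) :=
            lintegral_const_mul' _ _ ENNReal.ofReal_ne_top
        _ < ⊤ := ENNReal.mul_lt_top ENNReal.ofReal_lt_top hkey
  refine hgInt.mono' hK.aestronglyMeasurable ?_
  rw [ae_restrict_iff' measurableSet_Ici]
  exact Filter.Eventually.of_forall fun y hy => hbound y hy

/-- The transformation-operator integral `∫_x^∞ K(y) e^{iky} dy` converges
absolutely for `Im k ≥ 0`, is continuous on the closed upper half plane and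
analytic in the open upper half plane, given the standard decay estimate on
`K`. -/
theorem transformation_integral_analytic
    (h : ℝ → ℝ) (hpos : ∀ z, 0 ≤ h z)
    (hint : Integrable (fun z => (1 + |z|) * h z))
    (C : ℝ) (hC : 0 < C) (x : ℝ)
    (K : ℝ → ℂ) (hK : Measurable K)
    (hbound : ∀ y ≥ x, ‖K y‖ ≤ C * ∫ z in Ici ((x + y) / 2), h z) :
    (∀ k : ℂ, 0 ≤ k.im →
        IntegrableOn (fun y : ℝ => K y * Complex.exp (Complex.I * k * y)) (Ici x)) ∧
    ContinuousOn (fun k : ℂ => ∫ y in Ici x, K y * Complex.exp (Complex.I * k * y))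
      {k : ℂ | 0 ≤ k.im} ∧
    DifferentiableOn ℂ (fun k : ℂ => ∫ y in Ici x, K y * Complex.exp (Complex.I * k * y))
      {k : ℂ | 0 < k.im} := by
  have KInt : IntegrableOn K (Ici x) :=
    aux_integrableOn_K h hpos hint C hC x K hK hbound
  have hnorm : ∀ (k : ℂ) (y : ℝ), ‖Complex.exp (Complex.I * k * y)‖
      = Real.exp (-(k.im) * y) := by
    intro k y
    have hre : (Complex.I * k * (y : ℂ)).re = -(k.im) * y := by
      simp [Complex.mul_re, Complex.mul_im]
    rw [Complex.norm_exp, hre]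
  have hmeasF : ∀ k : ℂ, AEStronglyMeasurable
      (fun y : ℝ => K y * Complex.exp (Complex.I * k * y)) (volume.restrict (Ici x)) := by
    intro k
    exact (hK.aestronglyMeasurable.mul
      ((Complex.continuous_exp.comp
        (continuous_const.mul Complex.continuous_ofReal)).aestronglyMeasurable)).restrict
  have hpart1 : ∀ k : ℂ, 0 ≤ k.im →
      IntegrableOn (fun y : ℝ => K y * Complex.exp (Complex.I * k * y)) (Ici x) := by
    intro k hk
    refine (KInt.norm.const_mul (Real.exp (-(k.im) * x))).mono' (hmeasF k) ?_
    rw [ae_restrict_iff' measurableSet_Ici]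
    refine Filter.Eventually.of_forall fun y hy => ?_
    rw [norm_mul, hnorm]
    have : Real.exp (-(k.im) * y) ≤ Real.exp (-(k.im) * x) := by
      apply Real.exp_le_exp.2
      have : x ≤ y := hy
      nlinarith
    calc ‖K y‖ * Real.exp (-k.im * y) ≤ ‖K y‖ * Real.exp (-k.im * x) := by
          exact mul_le_mul_of_nonneg_left this (norm_nonneg _)
      _ = Real.exp (-k.im * x) * ‖K y‖ := mul_comm _ _
  refine ⟨hpart1, ?_, ?_⟩
  · -- continuity on the closed upper half plane
    intro k₀ hk₀
    have hk₀im : 0 ≤ k₀.im := hk₀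
    set M : ℝ := k₀.im + 1 with hM
    refine continuousWithinAt_of_dominated ?_ ?_ ?_ ?_
      (bound := fun y => Real.exp (M * |x|) * ‖K y‖)
    · exact Filter.Eventually.of_forall fun k => hmeasF k
    · have hball : Metric.ball k₀ 1 ∈ nhdsWithin k₀ {k : ℂ | 0 ≤ k.im} :=
        mem_nhdsWithin_of_mem_nhds (Metric.ball_mem_nhds _ one_pos)
      filter_upwards [self_mem_nhdsWithin, hball] with k hkS hkB
      rw [ae_restrict_iff' measurableSet_Ici]
      refine Filter.Eventually.of_forall fun y hy => ?_
      have hyx : x ≤ y := hy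
      have hkim0 : 0 ≤ k.im := hkS
      have hkimM : k.im ≤ M := by
        have h1 : |(k - k₀).im| ≤ ‖k - k₀‖ := Complex.abs_im_le_norm _
        have h2 : ‖k - k₀‖ < 1 := by
          rw [← Complex.dist_eq]; exact hkB
        have h3 : |k.im - k₀.im| < 1 := by
          rw [← Complex.sub_im]; linarith [lt_of_le_of_lt h1 h2]
        rw [abs_lt] at h3
        simp only [hM]; linarith
      rw [norm_mul, hnorm]
      have hMpos : 0 < M := by simp only [hM]; linarith
      have hle : -(k.im) * y ≤ M * |x| := by
        rcases le_or_gt 0 y with hy0 | hy0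
        · have : 0 ≤ M * |x| := by positivity
          nlinarith
        · nlinarith [neg_abs_le x, le_abs_self x]
      calc ‖K y‖ * Real.exp (-k.im * y) ≤ ‖K y‖ * Real.exp (M * |x|) :=
            mul_le_mul_of_nonneg_left (Real.exp_le_exp.2 hle) (norm_nonneg _)
        _ = Real.exp (M * |x|) * ‖K y‖ := mul_comm _ _
    · exact KInt.norm.const_mul _
    · refine Filter.Eventually.of_forall fun y => ?_
      exact (continuous_const.mul (Complex.continuous_exp.comp
        ((continuous_const.mul continuous_id).mul continuous_const))).continuousWithinAt
  · -- analyticity on the open upper half plane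
    intro k₀ hk₀
    set δ : ℝ := k₀.im with hδ
    have hδpos : 0 < δ := hk₀
    have key := hasDerivAt_integral_of_dominated_loc_of_deriv_le
      (μ := volume.restrict (Ici x)) (x₀ := k₀)
      (F := fun (k : ℂ) (y : ℝ) => K y * Complex.exp (Complex.I * k * y))
      (F' := fun (k : ℂ) (y : ℝ) =>
        K y * (Complex.exp (Complex.I * k * y) * (Complex.I * y)))
      (bound := fun y => (Real.exp ((3 * δ / 2) * |x|) * (|x| + 2 / δ)) * ‖K y‖)
      (s := Metric.ball k₀ (δ / 2)) (Metric.ball_mem_nhds _ (half_pos hδpos))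
      (Filter.Eventually.of_forall fun k => hmeasF k)
      (hpart1 k₀ hδpos.le)
      ((hK.aestronglyMeasurable.mul
        ((Complex.continuous_exp.comp (continuous_const.mul Complex.continuous_ofReal)).mul
          (continuous_const.mul Complex.continuous_ofReal)).aestronglyMeasurable).restrict)
      ?_ (KInt.norm.const_mul _) ?_
    · exact key.2.differentiableAt.differentiableWithinAt
    · -- the bound on the derivative
      rw [ae_restrict_iff' measurableSet_Ici]
      refine Filter.Eventually.of_forall fun y hy k hk => ?_
      have hyx : x ≤ y := hy
      have hball : ‖k - k₀‖ < δ / 2 := by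
        rw [← Complex.dist_eq]; exact hk
      have him : |k.im - δ| < δ / 2 := by
        have h1 : |(k - k₀).im| ≤ ‖k - k₀‖ := Complex.abs_im_le_norm _
        rw [Complex.sub_im] at h1
        exact lt_of_le_of_lt h1 hball
      rw [abs_lt] at him
      have hk1 : δ / 2 < k.im := by linarith
      have hk2 : k.im < 3 * δ / 2 := by linarith
      have hnorm' : ‖K y * (Complex.exp (Complex.I * k * y) * (Complex.I * y))‖
          = ‖K y‖ * (Real.exp (-(k.im) * y) * |y|) := by
        rw [norm_mul, norm_mul, hnorm, norm_mul]
        simp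
      rw [hnorm']
      have ht : 0 ≤ y - x := by linarith
      set E : ℝ := Real.exp ((3 * δ / 2) * |x|) with hE
      have hEpos : 0 < E := Real.exp_pos _
      have e1 : Real.exp (-(k.im) * y) ≤ E * Real.exp (-(δ / 2 * (y - x))) := by
        rw [hE, ← Real.exp_add]
        apply Real.exp_le_exp.2
        have A : -(k.im) * x ≤ (3 * δ / 2) * |x| := by
          nlinarith [neg_abs_le x, le_abs_self x, abs_nonneg x]
        nlinarith [mul_le_mul_of_nonneg_right hk1.le ht]
      have e2 : |y| ≤ |x| + (y - x) := by
        have h1 : |y| = |x + (y - x)| := by ring_nf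
        rw [h1]
        calc |x + (y - x)| ≤ |x| + |y - x| := abs_add_le _ _
          _ = |x| + (y - x) := by rw [_root_.abs_of_nonneg ht]
      have e3 : (y - x) * Real.exp (-(δ / 2 * (y - x))) ≤ 2 / δ := by
        have := aux_texp_le (δ / 2) (y - x) (half_pos hδpos) ht
        calc (y - x) * Real.exp (-(δ / 2 * (y - x))) ≤ 1 / (δ / 2) := this
          _ = 2 / δ := by field_simp
      have e4 : Real.exp (-(δ / 2 * (y - x))) ≤ 1 := by
        apply Real.exp_le_one_iff.2
        nlinarith
      have e5 : Real.exp (-k.im * y) * |y| ≤ E * (|x| + 2 / δ) := by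
        calc Real.exp (-k.im * y) * |y|
            ≤ (E * Real.exp (-(δ / 2 * (y - x)))) * (|x| + (y - x)) := by
              apply mul_le_mul e1 e2 (abs_nonneg _)
              positivity
          _ = E * (|x| * Real.exp (-(δ / 2 * (y - x)))
              + (y - x) * Real.exp (-(δ / 2 * (y - x)))) := by ring
          _ ≤ E * (|x| + 2 / δ) := by
              apply mul_le_mul_of_nonneg_left _ hEpos.le
              have := mul_le_mul_of_nonneg_left e4 (abs_nonneg x)
              linarith
      calc ‖K y‖ * (Real.exp (-k.im * y) * |y|)
          ≤ ‖K y‖ * (E * (|x| + 2 / δ)) :=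
            mul_le_mul_of_nonneg_left e5 (norm_nonneg _)
        _ = E * (|x| + 2 / δ) * ‖K y‖ := by ring
    · -- differentiability of the integrand
      refine Filter.Eventually.of_forall fun y k _ => ?_
      have base : HasDerivAt (fun k : ℂ => Complex.I * k * (y : ℂ))
          (Complex.I * (y : ℂ)) k := by
        simpa using ((hasDerivAt_id k).const_mul Complex.I).mul_const (y : ℂ)
      exact (base.cexp).const_mul (K y)
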